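/- Let α ≥ 2 and let k ≥ 1 be an integer with α ≥ ln k. Then ∫_{1-e^{-α}}^{1} (1 - t^k)/(1 - t)^{1 + 1/α} dt ≤ (7e/3) · ∫_{1-e^{-α}}^{1} (1 - t^k)/(1 - t) dt. -/

import Mathlib

open Real MeasureTheory intervalIntegral

private lemma sum_range_id_real (n : ℕ) :
    (∑ j ∈ Finset.range n, (j:ℝ)) = (n:ℝ) * ((n:ℝ) - 1) / 2 := by
  induction n with
  | zero => simp
  | succ m ih => rw [Finset.sum_range_succ, ih]; push_cast; ring

set_option maxHeartbeats 1000000 in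
theorem second_integral_bound (α : ℝ) (hα2 : 2 ≤ α) (k : ℕ) (hk : 1 ≤ k)
    (hαk : Real.log k ≤ α) :
    ∫ t in (1 - Real.exp (-α))..1, (1 - t ^ k) / (1 - t) ^ (1 + 1 / α : ℝ)
      ≤ (7 * Real.exp 1 / 3) * ∫ t in (1 - Real.exp (-α))..1, (1 - t ^ k) / (1 - t) := by
  have hα0 : 0 < α := by linarith
  set ε : ℝ := Real.exp (-α) with hεdef
  set s : ℝ := 1/α with hsdef
  have hαs : α * s = 1 := by rw [hsdef]; field_simp
  have hs0 : 0 < s := by positivity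
  have hs1 : s < 1 := by rw [hsdef, div_lt_one hα0]; linarith
  have hε0 : 0 < ε := exp_pos _
  have hε1 : ε < 1 := by rw [hεdef, exp_lt_one_iff]; linarith
  have ha1 : 1 - ε ≤ 1 := by linarith
  have ha0 : 0 < 1 - ε := by linarith
  have hkR : (1:ℝ) ≤ (k:ℝ) := by exact_mod_cast hk
  have hkε : (k:ℝ) * ε ≤ 1 := by
    have hk0 : (0:ℝ) < k := by linarith
    have h1 : (k:ℝ) ≤ Real.exp α := by
      rw [← Real.exp_log hk0]; exact Real.exp_le_exp.2 hαk
    calc (k:ℝ) * ε ≤ Real.exp α * ε := by nlinarith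
      _ = 1 := by rw [hεdef, ← Real.exp_add]; simp
  set p : ℝ → ℝ := fun t => ∑ j ∈ Finset.range k, t ^ j with hpdef
  have hpc : Continuous p := by
    apply continuous_finset_sum; intro i _; exact continuous_pow i
  set w : ℝ → ℝ := fun t => (1 - t) ^ (-s) with hwdef
  have hp1 : p 1 = (k:ℝ) := by simp [hpdef]
  have hp_le : ∀ t : ℝ, 0 ≤ t → t ≤ 1 → p t ≤ (k:ℝ) := by
    intro t ht0 ht1
    calc p t ≤ ∑ j ∈ Finset.range k, (1:ℝ) := by
          apply Finset.sum_le_sum; intro j _; exact pow_le_one₀ ht0 ht1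
      _ = (k:ℝ) := by simp
  have hp_nonneg : ∀ t : ℝ, 0 ≤ t → 0 ≤ p t := by
    intro t ht0
    apply Finset.sum_nonneg; intro j _; positivity
  have hp_ge : ∀ t : ℝ, 0 ≤ t → (k:ℝ) - (k:ℝ)*((k:ℝ)-1)/2 * (1 - t) ≤ p t := by
    intro t ht0
    have h : ∑ j ∈ Finset.range k, (1 + (j:ℝ) * (t - 1)) ≤ p t := by
      apply Finset.sum_le_sum; intro j _
      have h2 := one_add_mul_le_pow (by linarith : (-2:ℝ) ≤ t - 1) j
      have e : (1 + (t-1)) = t := by ring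
      rwa [e] at h2
    calc (k:ℝ) - (k:ℝ)*((k:ℝ)-1)/2 * (1 - t)
        = ∑ j ∈ Finset.range k, (1 + (j:ℝ) * (t - 1)) := by
          rw [Finset.sum_add_distrib, Finset.sum_const, Finset.card_range,
            ← Finset.sum_mul, sum_range_id_real]; ring
      _ ≤ p t := h
  have hgeo : ∀ t : ℝ, p t * (1 - t) = 1 - t ^ k := by
    intro t
    have h := geom_sum_mul t k
    have : p t = ∑ i ∈ Finset.range k, t ^ i := rfl
    rw [this]; linear_combination -h
  have hw_ge : ∀ t : ℝ, 1 - ε ≤ t → t < 1 → Real.exp 1 ≤ w t := by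
    intro t hta ht1
    have h1t : 0 < 1 - t := by linarith
    have h1 : (1 - t) ^ s ≤ ε ^ s :=
      Real.rpow_le_rpow (le_of_lt h1t) (by linarith) (le_of_lt hs0)
    have hεs : ε ^ s = Real.exp (-1) := by
      rw [hεdef, ← Real.exp_mul]; congr 1; nlinarith
    have h2 : w t = ((1 - t) ^ s)⁻¹ := by
      rw [hwdef]; exact Real.rpow_neg (le_of_lt h1t) s
    have h3 : (0:ℝ) < (1 - t) ^ s := Real.rpow_pos_of_pos h1t s
    have h4 : (Real.exp 1) = (ε ^ s)⁻¹ := by rw [hεs, ← Real.exp_neg]; norm_num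
    rw [h2, h4]
    exact inv_anti₀ h3 h1
  -- integrability
  have hw_int : IntervalIntegrable w volume (1-ε) 1 := by
    have h := (intervalIntegral.intervalIntegrable_rpow' (a := 0) (b := ε)
      (by linarith : (-1:ℝ) < -s)).comp_sub_left 1
    rw [hwdef]
    simpa using h.symm
  have hφ_int : IntervalIntegrable (fun t => p t * w t) volume (1-ε) 1 :=
    hw_int.continuousOn_mul hpc.continuousOn
  have hm1_int : IntervalIntegrable (fun t => Real.exp 1 * p t) volume (1-ε) 1 :=
    (continuous_const.mul hpc).intervalIntegrable _ _
  have hm2_int : IntervalIntegrable (fun t => (k:ℝ) * (w t - Real.exp 1)) volume (1-ε) 1 :=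
    (hw_int.sub intervalIntegrable_const).const_mul _
  have hm_int : IntervalIntegrable
      (fun t => Real.exp 1 * p t + (k:ℝ) * (w t - Real.exp 1)) volume (1-ε) 1 :=
    hm1_int.add hm2_int
  -- step 1 : rewrite LHS integrand
  have step1 : (∫ t in (1-ε)..1, (1 - t ^ k) / (1 - t) ^ (1 + s : ℝ))
      = ∫ t in (1-ε)..1, p t * w t := by
    apply intervalIntegral.integral_congr
    intro t ht
    rw [Set.uIcc_of_le ha1] at ht
    obtain ⟨hta, ht1⟩ := ht
    rcases lt_or_eq_of_le ht1 with h | h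
    · have h1t : 0 < 1 - t := by linarith
      rw [hwdef]
      show (1 - t ^ k) / (1 - t) ^ (1 + s : ℝ) = p t * (1 - t) ^ (-s)
      rw [← hgeo t, Real.rpow_neg h1t.le, Real.rpow_add h1t, Real.rpow_one,
        mul_comm (p t) (1 - t), mul_div_mul_left _ _ (ne_of_gt h1t), div_eq_mul_inv]
    · subst h
      simp [hwdef, Real.zero_rpow (ne_of_gt (by linarith : (0:ℝ) < 1 + s)),
        Real.zero_rpow (neg_ne_zero.2 (ne_of_gt hs0))]
  -- step 2 : rewrite RHS integrand
  have step2 : (∫ t in (1-ε)..1, (1 - t ^ k) / (1 - t)) = ∫ t in (1-ε)..1, p t := by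
    apply intervalIntegral.integral_congr_ae
    have hne : ∀ᵐ (x:ℝ), x ≠ 1 := by simpa [ae_iff] using measure_singleton (1:ℝ)
    filter_upwards [hne] with x hx _
    have h1x : (1:ℝ) - x ≠ 0 := sub_ne_zero.2 (Ne.symm hx)
    field_simp [← hgeo x]
    linear_combination -(hgeo x)
  -- mono 1
  have mono1 : (∫ t in (1-ε)..1, p t * w t)
      ≤ ∫ t in (1-ε)..1, (Real.exp 1 * p t + (k:ℝ) * (w t - Real.exp 1)) := by
    apply intervalIntegral.integral_mono_on ha1 hφ_int hm_int
    intro t ht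
    obtain ⟨hta, ht1⟩ := ht
    rcases lt_or_eq_of_le ht1 with h | h
    · have hwt := hw_ge t hta h
      have hple := hp_le t (by linarith) (le_of_lt h)
      have hpn := hp_nonneg t (by linarith)
      nlinarith [mul_nonneg (sub_nonneg.2 hple) (sub_nonneg.2 hwt)]
    · subst h
      have hw1 : w 1 = 0 := by
        rw [hwdef]; simp [Real.zero_rpow (neg_ne_zero.2 (ne_of_gt hs0))]
      rw [hw1, hp1]; ring_nf; rfl
  -- value of ∫ m
  have hwval : (∫ t in (1-ε)..1, w t) = Real.exp 1 * ε / (1 - s) := by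
    rw [hwdef]
    have h := intervalIntegral.integral_comp_sub_left (a := 1-ε) (b := 1)
      (fun u : ℝ => u ^ (-s)) 1
    simp only [sub_self, sub_sub_cancel] at h
    rw [h, integral_rpow (Or.inl (by linarith : (-1:ℝ) < -s))]
    rw [Real.zero_rpow (by intro hc; nlinarith : -s + 1 ≠ 0)]
    have hεp : ε ^ (-s + 1 : ℝ) = Real.exp 1 * ε := by
      rw [hεdef, ← Real.exp_mul, ← Real.exp_add]
      congr 1; nlinarith
    rw [hεp]; ring_nf
  have hmval : (∫ t in (1-ε)..1, (Real.exp 1 * p t + (k:ℝ) * (w t - Real.exp 1)))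
      = Real.exp 1 * (∫ t in (1-ε)..1, p t)
        + (k:ℝ) * (Real.exp 1 * ε / (1 - s) - Real.exp 1 * ε) := by
    rw [intervalIntegral.integral_add hm1_int hm2_int,
      intervalIntegral.integral_const_mul, intervalIntegral.integral_const_mul,
      intervalIntegral.integral_sub hw_int intervalIntegrable_const,
      intervalIntegral.integral_const, hwval]
    simp only [smul_eq_mul]; ring
  -- mono 2 : lower bound on ∫ p
  have mono2 : (k:ℝ) * ε - (k:ℝ)*((k:ℝ)-1)/2 * ε^2/2 ≤ ∫ t in (1-ε)..1, p t := by
    have hlin_int : IntervalIntegrable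
        (fun t : ℝ => (k:ℝ) - (k:ℝ)*((k:ℝ)-1)/2 * (1 - t)) volume (1-ε) 1 :=
      (continuous_const.sub (continuous_const.mul (continuous_const.sub continuous_id))).intervalIntegrable _ _
    have h1 : (∫ t in (1-ε)..1, ((k:ℝ) - (k:ℝ)*((k:ℝ)-1)/2 * (1 - t)))
        ≤ ∫ t in (1-ε)..1, p t := by
      apply intervalIntegral.integral_mono_on ha1 hlin_int (hpc.intervalIntegrable _ _)
      intro t ht
      exact hp_ge t (by linarith [ht.1])
    have hlin2 : (∫ t in (1-ε)..1, (1 - t)) = ε^2/2 := by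
      have h := intervalIntegral.integral_comp_sub_left (a := 1-ε) (b := 1) (fun u : ℝ => u) 1
      simp only [sub_self, sub_sub_cancel] at h
      rw [h, integral_id]; ring
    have h2 : (∫ t in (1-ε)..1, ((k:ℝ) - (k:ℝ)*((k:ℝ)-1)/2 * (1 - t)))
        = (k:ℝ) * ε - (k:ℝ)*((k:ℝ)-1)/2 * ε^2/2 := by
      rw [intervalIntegral.integral_sub intervalIntegrable_const
          ((show Continuous fun t : ℝ => (k:ℝ)*((k:ℝ)-1)/2 * (1 - t) by fun_prop).intervalIntegrable _ _),
        intervalIntegral.integral_const, intervalIntegral.integral_const_mul, hlin2]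
      simp only [smul_eq_mul]; ring
    linarith
  -- final arithmetic
  rw [step1, step2]
  set P : ℝ := ∫ t in (1-ε)..1, p t with hPdef
  have he0 : (0:ℝ) < Real.exp 1 := exp_pos _
  have hα1 : (0:ℝ) < α - 1 := by linarith
  have hfs : Real.exp 1 * ε / (1 - s) - Real.exp 1 * ε = Real.exp 1 * ε / (α - 1) := by
    rw [hsdef]
    field_simp
    ring
  have key1 : (k:ℝ) * ε ≤ (4/3) * ((k:ℝ) * ε - (k:ℝ)*((k:ℝ)-1)/2 * ε^2/2) := by
    nlinarith [mul_nonneg (mul_nonneg (by linarith : (0:ℝ) ≤ (k:ℝ)) hε0.le)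
      (by nlinarith : (0:ℝ) ≤ 1 - (k:ℝ)*ε + ε)]
  have key2 : (k:ℝ) * (Real.exp 1 * ε / (α - 1)) ≤ Real.exp 1 * ((k:ℝ) * ε) := by
    have hnum : (k:ℝ) * (Real.exp 1 * ε) ≤ Real.exp 1 * ((k:ℝ) * ε) * (α - 1) := by
      nlinarith [mul_pos (mul_pos he0 hε0) (show (0:ℝ) < (k:ℝ) by linarith)]
    calc (k:ℝ) * (Real.exp 1 * ε / (α - 1)) = (k:ℝ) * (Real.exp 1 * ε) / (α - 1) := by ring
      _ ≤ Real.exp 1 * ((k:ℝ) * ε) := (div_le_iff₀ hα1).mpr hnum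
  have hP4 : Real.exp 1 * ((k:ℝ) * ε) ≤ (4/3) * Real.exp 1 * P := by
    nlinarith [key1, mono2, he0]
  calc (∫ t in (1-ε)..1, p t * w t)
      ≤ Real.exp 1 * P + (k:ℝ) * (Real.exp 1 * ε / (1 - s) - Real.exp 1 * ε) := by
        rw [← hmval]; exact mono1
    _ = Real.exp 1 * P + (k:ℝ) * (Real.exp 1 * ε / (α - 1)) := by rw [hfs]
    _ ≤ Real.exp 1 * P + Real.exp 1 * ((k:ℝ) * ε) := by linarith [key2]
    _ ≤ Real.exp 1 * P + (4/3) * Real.exp 1 * P := by linarith [hP4]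
    _ = 7 * Real.exp 1 / 3 * P := by ring
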